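/- If β > β_c, then g(k) := 1 + βk² − ων₀ − ν₀²·f(k) satisfies g(k) > 0 for every k ≠ 0 and g(0) = 0. In other words, for strong surface tension g(k) ≥ 0 for all k ∈ ℝ, with equality precisely when k = 0 (so the dispersion curve ν(k) attains its global minimum only at k₀ = 0, where ν(0) = ν₀). -/

import Mathlib

/-- `f(k) = |k|·coth|k|`, extended by `f(0) = 1`. -/
noncomputable def fdisp (k : ℝ) : ℝ :=
  if k = 0 then 1 else k * Real.cosh k / Real.sinh k

private lemma derivA (x : ℝ) :
    HasDerivAt (fun x : ℝ => x * Real.cosh x - Real.sinh x) (x * Real.sinh x) x := by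
  have h := ((hasDerivAt_id x).mul (Real.hasDerivAt_cosh x)).sub (Real.hasDerivAt_sinh x)
  simp only [id_eq, one_mul] at h
  exact h.congr_deriv (by ring)

private lemma lemA {k : ℝ} (hk : 0 ≤ k) : Real.sinh k ≤ k * Real.cosh k := by
  have hmono : MonotoneOn (fun x : ℝ => x * Real.cosh x - Real.sinh x) (Set.Ici 0) := by
    apply monotoneOn_of_deriv_nonneg (convex_Ici 0)
    · exact (Continuous.sub (continuous_id.mul Real.continuous_cosh)
        Real.continuous_sinh).continuousOn
    · intro x _; exact (derivA x).differentiableAt.differentiableWithinAt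
    · intro x hx
      rw [interior_Ici] at hx
      rw [(derivA x).deriv]
      exact mul_nonneg hx.le (Real.sinh_nonneg_iff.mpr hx.le)
  have := hmono (Set.self_mem_Ici) (Set.mem_Ici.mpr hk) hk
  simp at this
  linarith

private lemma derivB (x : ℝ) :
    HasDerivAt (fun x : ℝ => (3 + x ^ 2) * Real.sinh x - 3 * (x * Real.cosh x))
      (x * (x * Real.cosh x - Real.sinh x)) x := by
  have h1 : HasDerivAt (fun x : ℝ => 3 + x ^ 2) (2 * x) x := by
    simpa using (hasDerivAt_pow 2 x).const_add 3
  have h := (h1.mul (Real.hasDerivAt_sinh x)).sub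
    (((hasDerivAt_id x).mul (Real.hasDerivAt_cosh x)).const_mul 3)
  simp only [id_eq, one_mul] at h
  exact h.congr_deriv (by ring)

private lemma lemB {k : ℝ} (hk : 0 ≤ k) :
    3 * (k * Real.cosh k) ≤ (3 + k ^ 2) * Real.sinh k := by
  have hmono : MonotoneOn
      (fun x : ℝ => (3 + x ^ 2) * Real.sinh x - 3 * (x * Real.cosh x)) (Set.Ici 0) := by
    apply monotoneOn_of_deriv_nonneg (convex_Ici 0)
    · exact (Continuous.sub ((continuous_const.add (continuous_pow 2)).mul
        Real.continuous_sinh)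
        (continuous_const.mul (continuous_id.mul Real.continuous_cosh))).continuousOn
    · intro x _; exact (derivB x).differentiableAt.differentiableWithinAt
    · intro x hx
      rw [interior_Ici] at hx
      rw [(derivB x).deriv]
      exact mul_nonneg hx.le (by linarith [lemA hx.le])
  have := hmono (Set.self_mem_Ici) (Set.mem_Ici.mpr hk) hk
  simp at this
  linarith

private lemma keyPos {k : ℝ} (hk : 0 < k) :
    k * Real.cosh k / Real.sinh k ≤ 1 + k ^ 2 / 3 := by
  have hs : 0 < Real.sinh k := Real.sinh_pos_iff.mpr hk
  rw [div_le_iff₀ hs]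
  have := lemB hk.le
  nlinarith

private lemma fkey {k : ℝ} (hk : k ≠ 0) : fdisp k ≤ 1 + k ^ 2 / 3 := by
  rcases hk.lt_or_gt with h | h
  · have hpos : (0:ℝ) < -k := by linarith
    have := keyPos hpos
    rw [Real.cosh_neg, Real.sinh_neg] at this
    have heq : -k * Real.cosh k / -Real.sinh k = k * Real.cosh k / Real.sinh k := by
      rw [show -k * Real.cosh k = -(k * Real.cosh k) by ring, neg_div_neg_eq]
    rw [heq] at this
    simpa [fdisp, hk] using this
  · simpa [fdisp, h.ne'] using keyPos h

theorem stmt9 (ω β ν₀ βc : ℝ)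
    (hν₀ : ν₀ = (-ω + Real.sqrt (ω ^ 2 + 4)) / 2)
    (hβc : βc = (ω ^ 2 + 2 - ω * Real.sqrt (ω ^ 2 + 4)) / 6)
    (hβ : βc < β) :
    (∀ k : ℝ, k ≠ 0 → 0 < 1 + β * k ^ 2 - ω * ν₀ - ν₀ ^ 2 * fdisp k) ∧
    1 + β * (0 : ℝ) ^ 2 - ω * ν₀ - ν₀ ^ 2 * fdisp 0 = 0 := by
  set s := Real.sqrt (ω ^ 2 + 4) with hs
  have hs2 : s ^ 2 = ω ^ 2 + 4 := Real.sq_sqrt (by positivity)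
  have hν2 : ν₀ ^ 2 = (ω ^ 2 + 2 - ω * s) / 2 := by rw [hν₀]; nlinarith
  have h1 : 1 - ω * ν₀ = ν₀ ^ 2 := by rw [hν2, hν₀]; ring
  have hβc3 : βc = ν₀ ^ 2 / 3 := by rw [hβc, hν2]; ring
  constructor
  · intro k hk
    have hf := fkey hk
    have hk2 : 0 < k ^ 2 := by positivity
    have hnn : 0 ≤ ν₀ ^ 2 := sq_nonneg _
    nlinarith [mul_nonneg hnn (by linarith : (0:ℝ) ≤ 1 + k ^ 2 / 3 - fdisp k),
      mul_pos (by linarith : (0:ℝ) < β - ν₀ ^ 2 / 3) hk2]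
  · simp [fdisp]; linarith
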